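/- Let g be a finite-dimensional Lie algebra over ℂ with nondegenerate Killing form and a ℤ/nℤ-grading g = ⊕_{i ∈ ℤ/nℤ} g_i, let j ∈ ℤ/nℤ, and let h ∈ g_j be such that ad h : g → g is a semisimple endomorphism. If a ∈ ℤ/nℤ satisfies [x, h] = 0 for all x ∈ g_{-a}, then [y, h] = 0 for all y ∈ g_a. -/

import Mathlib

open LieAlgebra LinearMap

lemma grading_killing_orth {n : ℕ}
    {L : Type} [LieRing L] [LieAlgebra ℂ L] [FiniteDimensional ℂ L]
    (V : ZMod n → Submodule ℂ L)
    (hVinternal : DirectSum.IsInternal V)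
    (hVbracket : ∀ i j : ZMod n, ∀ x ∈ V i, ∀ y ∈ V j, ⁅x, y⁆ ∈ V (i + j))
    {p q : ZMod n} (hpq : p + q ≠ 0) {x y : L} (hx : x ∈ V p) (hy : y ∈ V q) :
    killingForm ℂ L x y = 0 := by
  rw [killingForm_apply_apply]
  refine LinearMap.trace_eq_zero_of_mapsTo_ne hVinternal (fun m ↦ p + q + m)
    (fun m hm ↦ hpq (by rwa [add_eq_right] at hm)) (fun m v hv ↦ ?_)
  have : (ad ℂ L x ∘ₗ ad ℂ L y) v = ⁅x, ⁅y, v⁆⁆ := rfl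
  rw [SetLike.mem_coe, this]
  have := hVbracket p (q + m) x hx ⁅y, v⁆ (hVbracket q m y hy v hv)
  rwa [← add_assoc] at this

/-- Let `L` be a finite-dimensional complex Lie algebra with
nondegenerate Killing form and a `ℤ/nℤ`-grading `V`, let `j : ZMod n`, and let
`h ∈ V j` be such that `ad h : L → L` is a semisimple endomorphism.  If `a : ZMod n`
satisfies `⁅x, h⁆ = 0` for all `x ∈ V (-a)`, then `⁅y, h⁆ = 0` for all `y ∈ V a`. -/
theorem centralizer_propagates_up {n : ℕ}
    {L : Type} [LieRing L] [LieAlgebra ℂ L] [FiniteDimensional ℂ L]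
    (hnd : (killingForm ℂ L).Nondegenerate)
    (V : ZMod n → Submodule ℂ L)
    (hVinternal : DirectSum.IsInternal V)
    (hVbracket : ∀ i j : ZMod n, ∀ x ∈ V i, ∀ y ∈ V j, ⁅x, y⁆ ∈ V (i + j))
    (j : ZMod n) (h : L) (hh : h ∈ V j)
    (hss : Module.End.IsSemisimple (LieAlgebra.ad ℂ L h))
    (a : ZMod n) (ha : ∀ x ∈ V (-a), ⁅x, h⁆ = 0) :
    ∀ y ∈ V a, ⁅y, h⁆ = 0 := by
  -- key: ker (ad h)^2 = ker (ad h)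
  have key : ∀ w : L, ⁅h, ⁅h, w⁆⁆ = 0 → ⁅h, w⁆ = 0 := by
    intro w hw
    have hm : w ∈ (ad ℂ L h).genEigenspace 0 2 := by
      rw [Module.End.mem_genEigenspace]
      refine ⟨2, le_refl _, ?_⟩
      simp only [zero_smul, sub_zero, LinearMap.mem_ker, pow_two, Module.End.mul_apply]
      simpa [ad_apply] using hw
    have := Module.End.apply_eq_of_mem_of_comm_of_isFinitelySemisimple_of_isNil hm rfl
      hss.isFinitelySemisimple (by simp)
    simpa [ad_apply] using this
  intro y hy
  suffices hz : ⁅h, y⁆ = 0 by rw [← lie_skew, hz, neg_zero]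
  apply hnd.1
  intro u
  have hsup : u ∈ ⨆ q, V q := by rw [hVinternal.submodule_iSup_eq_top]; trivial
  induction hsup using Submodule.iSup_induction' with
  | mem q u hu =>
    by_cases hq : (j + a) + q = 0
    · -- q = -(j+a); show ⁅h, u⁆ = 0 and use invariance
      have huV : ⁅h, u⁆ ∈ V (-a) := by
        have := hVbracket j q h hh u hu
        have hjq : j + q = -a := by linear_combination hq
        rwa [hjq] at this
      have hu0 : ⁅h, u⁆ = 0 := by
        apply key
        rw [← lie_skew, ha _ huV, neg_zero]
      calc killingForm ℂ L ⁅h, y⁆ u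
          = - killingForm ℂ L ⁅y, h⁆ u := by
            rw [← lie_skew y h, map_neg, LinearMap.neg_apply, neg_neg]
        _ = - killingForm ℂ L y ⁅h, u⁆ := by
            rw [LieModule.traceForm_apply_lie_apply]
        _ = 0 := by rw [hu0]; simp
    · exact grading_killing_orth V hVinternal hVbracket hq
        (hVbracket j a h hh y hy) hu
  | zero => simp
  | add u v _ _ hu hv => rw [map_add, hu, hv, add_zero]
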